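/- arXiv:2011.00888 — 7 statements merged into one kernel-verified Lean document; each statement's English description precedes it below -/
import Mathlib

section
/- Suppose ε > 0, φ ∈ [0,1], H(φ) ∈ [0,1], H satisfies U(H(x)) = U(x) + ε for all x in a neighborhood of φ, and H is differentiable at φ. Then the derivative of H at φ is strictly greater than 1 (Lemma 1: sub-threshold pulse reception expands phase differences). -/
/-- Lemma 1: sub-threshold pulse reception expands phase differences.
If `ε > 0`, `φ ∈ [0,1]`, `H φ ∈ [0,1]`, `H` satisfies `U (H x) = U x + ε` for all `x`
in a neighborhood of `φ`, and `H` is differentiable at `φ`, then `deriv H φ > 1`. -/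
theorem subthreshold_deriv_gt_one
    (U H : ℝ → ℝ) (ε φ : ℝ)
    (hU : ContDiff ℝ 2 U) (hU0 : U 0 = 0) (hU1 : U 1 = 1)
    (hU' : ∀ x ∈ Set.Icc (0:ℝ) 1, 0 < deriv U x)
    (hU'' : ∀ x ∈ Set.Icc (0:ℝ) 1, deriv (deriv U) x < 0)
    (hε : 0 < ε)
    (hφ : φ ∈ Set.Icc (0:ℝ) 1)
    (hHφ : H φ ∈ Set.Icc (0:ℝ) 1)
    (hrel : ∀ᶠ x in nhds φ, U (H x) = U x + ε)
    (hdiff : DifferentiableAt ℝ H φ) :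
    1 < deriv H φ := by
  have hUdiff : Differentiable ℝ U := hU.differentiable (by norm_num)
  have hU'cont : Continuous (deriv U) :=
    (hU.iterate_deriv' 1 1).differentiable (by norm_num) |>.continuous
  -- U strictly monotone on [0,1]
  have hmono : StrictMonoOn U (Set.Icc 0 1) := by
    apply strictMonoOn_of_deriv_pos (convex_Icc 0 1) hUdiff.continuous.continuousOn
    intro x hx
    exact hU' x (interior_subset hx)
  -- deriv U strictly antitone on [0,1]
  have hanti : StrictAntiOn (deriv U) (Set.Icc 0 1) := by
    apply strictAntiOn_of_deriv_neg (convex_Icc 0 1) hU'cont.continuousOn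
    intro x hx
    exact hU'' x (interior_subset hx)
  -- φ < H φ
  have hlt : φ < H φ := by
    by_contra h
    push_neg at h
    have := hrel.self_of_nhds
    rcases eq_or_lt_of_le h with h | h
    · rw [h] at this; linarith
    · have := hmono hHφ hφ h; linarith
  -- chain rule
  have hcomp : deriv (U ∘ H) φ = deriv U (H φ) * deriv H φ :=
    deriv_comp φ (hUdiff (H φ)) hdiff
  have hrhs : deriv (U ∘ H) φ = deriv U φ := by
    have h1 : deriv (U ∘ H) φ = deriv (fun x => U x + ε) φ :=
      Filter.EventuallyEq.deriv_eq hrel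
    rw [h1, deriv_add_const]
  have hpHφ := hU' _ hHφ
  have hpφ := hU' _ hφ
  have hlt2 : deriv U (H φ) < deriv U φ := hanti hφ hHφ hlt
  have key : deriv U (H φ) * deriv H φ = deriv U φ := by rw [← hcomp, hrhs]
  nlinarith [key, hlt2, hpHφ]
end

section
/- Suppose ε > 0, φ₁ < φ₂ with φ₁, φ₂ ∈ [0,1], and h₁, h₂ ∈ [0,1] satisfy U(h₁) = U(φ₁) + ε and U(h₂) = U(φ₂) + ε. Then h₁ − φ₁ < h₂ − φ₂: the phase advance caused by a sub-threshold pulse is strictly larger for oscillators at larger phase. -/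
/-- The phase advance caused by a sub-threshold pulse is strictly larger for oscillators at
larger phase: if `φ₁ < φ₂` and `U h₁ = U φ₁ + ε`, `U h₂ = U φ₂ + ε` with all phases in `[0,1]`,
then `h₁ - φ₁ < h₂ - φ₂`. -/
theorem pulse_advance_strictMono
    (U : ℝ → ℝ) (ε φ₁ φ₂ h₁ h₂ : ℝ)
    (hU : ContDiff ℝ 2 U) (hU0 : U 0 = 0) (hU1 : U 1 = 1)
    (hU' : ∀ x ∈ Set.Icc (0:ℝ) 1, 0 < deriv U x)
    (hU'' : ∀ x ∈ Set.Icc (0:ℝ) 1, deriv (deriv U) x < 0)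
    (hε : 0 < ε)
    (hφ₁ : φ₁ ∈ Set.Icc (0:ℝ) 1) (hφ₂ : φ₂ ∈ Set.Icc (0:ℝ) 1)
    (hφ : φ₁ < φ₂)
    (hh₁ : h₁ ∈ Set.Icc (0:ℝ) 1) (hh₂ : h₂ ∈ Set.Icc (0:ℝ) 1)
    (hrel₁ : U h₁ = U φ₁ + ε)
    (hrel₂ : U h₂ = U φ₂ + ε) :
    h₁ - φ₁ < h₂ - φ₂ := by
  have hUdiff : Differentiable ℝ U := hU.differentiable (by norm_num)
  have hU2 : ContDiff ℝ ((1 : ℕ) + 1) U := by exact_mod_cast hU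
  have hderivC1 : ContDiff ℝ 1 (deriv U) := (contDiff_succ_iff_deriv.mp hU2).2.2
  have hderivDiff : Differentiable ℝ (deriv U) := hderivC1.differentiable (by norm_num)
  -- U strictly monotone on [0,1]
  have hmono : StrictMonoOn U (Set.Icc 0 1) := by
    apply strictMonoOn_of_deriv_pos (convex_Icc 0 1) hUdiff.continuous.continuousOn
    intro x hx
    rw [interior_Icc] at hx
    exact hU' x ⟨le_of_lt hx.1, le_of_lt hx.2⟩
  -- deriv U strictly antitone on [0,1]
  have hanti : StrictAntiOn (deriv U) (Set.Icc 0 1) := by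
    apply strictAntiOn_of_deriv_neg (convex_Icc 0 1) hderivDiff.continuous.continuousOn
    intro x hx
    rw [interior_Icc] at hx
    exact hU'' x ⟨le_of_lt hx.1, le_of_lt hx.2⟩
  set d := h₂ - φ₂ with hd
  have hd0 : 0 < d := by
    have : U φ₂ < U h₂ := by linarith
    have := hmono.lt_iff_lt hφ₂ hh₂
    have h22 : φ₂ < h₂ := by
      by_contra hc
      push_neg at hc
      have : U h₂ ≤ U φ₂ := hmono.monotoneOn hh₂ hφ₂ hc
      linarith
    linarith
  -- the key: h₁ < φ₁ + d
  have key : h₁ < φ₁ + d := by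
    by_cases hle : φ₁ + d ≤ 1
    · -- F x = U (x + d) - U x is strictly decreasing on [φ₁, φ₂]
      have hFanti : StrictAntiOn (fun x => U (x + d) - U x) (Set.Icc φ₁ φ₂) := by
        apply strictAntiOn_of_deriv_neg (convex_Icc φ₁ φ₂)
        · exact ((hUdiff.continuous.comp (continuous_id.add continuous_const)).sub
            hUdiff.continuous).continuousOn
        · intro x hx
          rw [interior_Icc] at hx
          have hx0 : (0:ℝ) ≤ x := le_trans hφ₁.1 hx.1.le
          have hx1 : x + d ≤ 1 := by linarith [hx.2, hh₂.2]
          have h1 : HasDerivAt (fun x => U (x + d)) (deriv U (x + d) * 1) x :=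
            ((hUdiff (x + d)).hasDerivAt).comp x ((hasDerivAt_id x).add_const d)
          have hdx : deriv (fun x => U (x + d) - U x) x = deriv U (x + d) * 1 - deriv U x := (h1.sub (hUdiff x).hasDerivAt).deriv
          rw [hdx, mul_one]
          have : deriv U (x + d) < deriv U x := by
            apply hanti ⟨hx0, by linarith⟩ ⟨by linarith, hx1⟩
            linarith
          linarith
      have hF : U (φ₂ + d) - U φ₂ < U (φ₁ + d) - U φ₁ :=
        hFanti ⟨le_rfl, hφ.le⟩ ⟨hφ.le, le_rfl⟩ hφ
      have hφ₂d : φ₂ + d = h₂ := by ring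
      rw [hφ₂d] at hF
      have hUh₁ : U h₁ < U (φ₁ + d) := by linarith
      have := (hmono.lt_iff_lt hh₁ ⟨by linarith [hφ₁.1, hd0], hle⟩).mp hUh₁
      exact this
    · push_neg at hle
      linarith [hh₁.2]
  linarith
end

section
/- Let ε > 0 and τ ∈ (0,1). Suppose H_ε and H_{2ε} are differentiable at the points where they are evaluated below, satisfy their defining relations U(H_μ(x)) = U(x) + μ in neighborhoods of those points, and all reception events involved are sub-threshold (i.e. the points τ, H_ε(τ), τ + H_{2ε}(τ) and their images lie in [0,1]). Then the first nonzero eigenvalue of the Jacobian of the return map of the S₃×S₂ cluster periodic orbit, λ₁ = (−1 + (1 + H_ε'(τ))·H_ε'(H_ε(τ)))·H_{2ε}'(τ + H_{2ε}(τ)), is strictly greater than 1. -/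
/-- Lemma 1: at any sub-threshold reception point, the derivative of the
pulse-response map is strictly greater than 1. -/
lemma pulse_deriv_gt_one
    (U H : ℝ → ℝ) (μ x : ℝ)
    (hU : ContDiff ℝ 2 U)
    (hU' : ∀ y ∈ Set.Icc (0:ℝ) 1, 0 < deriv U y)
    (hU'' : ∀ y ∈ Set.Icc (0:ℝ) 1, deriv (deriv U) y < 0)
    (hμ : 0 < μ)
    (hx : x ∈ Set.Icc (0:ℝ) 1)
    (hHx : H x ∈ Set.Icc (0:ℝ) 1)
    (hrel : ∀ᶠ y in nhds x, U (H y) = U y + μ)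
    (hd : DifferentiableAt ℝ H x) :
    1 < deriv H x := by
  have hUd : Differentiable ℝ U := hU.differentiable (by norm_num)
  have hUcd : Continuous (deriv U) := (hU.iterate_deriv' 1 1).continuous
  -- U is strictly monotone on [0,1]
  have hmono : StrictMonoOn U (Set.Icc (0:ℝ) 1) := by
    apply strictMonoOn_of_deriv_pos (convex_Icc 0 1) hUd.continuous.continuousOn
    intro y hy
    exact hU' y (interior_subset hy)
  -- deriv U is strictly antitone on [0,1]
  have hanti : StrictAntiOn (deriv U) (Set.Icc (0:ℝ) 1) := by
    apply strictAntiOn_of_deriv_neg (convex_Icc 0 1) hUcd.continuousOn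
    intro y hy
    exact hU'' y (interior_subset hy)
  -- x < H x
  have hUHx : U (H x) = U x + μ := hrel.self_of_nhds
  have hlt : x < H x := by
    by_contra h
    push_neg at h
    rcases eq_or_lt_of_le h with h | h
    · rw [h] at hUHx; linarith
    · have := hmono hHx hx h; linarith
  -- chain rule: deriv U (H x) * deriv H x = deriv U x
  have hcomp : deriv (U ∘ H) x = deriv U (H x) * deriv H x :=
    deriv_comp x (hUd _) hd
  have heq : deriv (U ∘ H) x = deriv U x := by
    have : (U ∘ H) =ᶠ[nhds x] (fun y => U y + μ) := hrel
    rw [this.deriv_eq]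
    simp [deriv_add_const]
  have h1 : deriv U (H x) * deriv H x = deriv U x := by rw [← hcomp, heq]
  have h2 : deriv U (H x) < deriv U x := hanti hx hHx hlt
  have h3 : 0 < deriv U (H x) := hU' _ hHx
  nlinarith

/-- The first nonzero eigenvalue of the Jacobian of the return map of the `S₃ × S₂` cluster
periodic orbit, `λ₁ = (-1 + (1 + Hε'(τ)) Hε'(Hε(τ))) H2ε'(τ + H2ε(τ))`, is strictly
greater than 1. -/
theorem s3s2_eigenvalue_one_gt_one
    (U Hε H2ε : ℝ → ℝ) (ε τ : ℝ)
    (hU : ContDiff ℝ 2 U) (hU0 : U 0 = 0) (hU1 : U 1 = 1)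
    (hU' : ∀ x ∈ Set.Icc (0:ℝ) 1, 0 < deriv U x)
    (hU'' : ∀ x ∈ Set.Icc (0:ℝ) 1, deriv (deriv U) x < 0)
    (hε : 0 < ε) (hτ : τ ∈ Set.Ioo (0:ℝ) 1)
    -- defining relations in neighborhoods of the evaluation points
    (hrel1 : ∀ᶠ x in nhds τ, U (Hε x) = U x + ε)
    (hrel2 : ∀ᶠ x in nhds (Hε τ), U (Hε x) = U x + ε)
    (hrel3 : ∀ᶠ x in nhds τ, U (H2ε x) = U x + 2 * ε)
    (hrel4 : ∀ᶠ x in nhds (τ + H2ε τ), U (H2ε x) = U x + 2 * ε)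
    -- all reception events are sub-threshold: points and images lie in [0,1]
    (hm1 : Hε τ ∈ Set.Icc (0:ℝ) 1)
    (hm2 : Hε (Hε τ) ∈ Set.Icc (0:ℝ) 1)
    (hm3 : H2ε τ ∈ Set.Icc (0:ℝ) 1)
    (hm4 : τ + H2ε τ ∈ Set.Icc (0:ℝ) 1)
    (hm5 : H2ε (τ + H2ε τ) ∈ Set.Icc (0:ℝ) 1)
    -- differentiability at the evaluation points
    (hd1 : DifferentiableAt ℝ Hε τ)
    (hd2 : DifferentiableAt ℝ Hε (Hε τ))
    (hd3 : DifferentiableAt ℝ H2ε (τ + H2ε τ)) :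
    1 < (-1 + (1 + deriv Hε τ) * deriv Hε (Hε τ)) * deriv H2ε (τ + H2ε τ) := by
  have hτ' : τ ∈ Set.Icc (0:ℝ) 1 := Set.mem_Icc_of_Ioo hτ
  have ha := pulse_deriv_gt_one U Hε ε τ hU hU' hU'' hε hτ' hm1 hrel1 hd1
  have hb := pulse_deriv_gt_one U Hε ε (Hε τ) hU hU' hU'' hε hm1 hm2 hrel2 hd2
  have hc := pulse_deriv_gt_one U H2ε (2 * ε) (τ + H2ε τ) hU hU' hU''
    (by linarith) hm4 hm5 hrel4 hd3
  have h1 : (1:ℝ) < -1 + (1 + deriv Hε τ) * deriv Hε (Hε τ) := by nlinarith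
  nlinarith [mul_lt_mul'' h1 hc (by norm_num) (by norm_num)]
end

section
/- Let ε > 0 and τ ∈ (0,1). Suppose H_ε and H_{2ε} are differentiable at the points where they are evaluated below, satisfy their defining relations U(H_μ(x)) = U(x) + μ in neighborhoods of those points, and all reception events involved are sub-threshold (i.e. the points τ, H_ε(τ), τ + H_{2ε}(τ) and their images lie in [0,1]). Then the second nonzero eigenvalue of the Jacobian of the return map of the S₃×S₂ cluster periodic orbit, λ₂ = (−1 + 2·H_ε'(τ))·H_ε'(H_ε(τ))·H_{2ε}'(τ + H_{2ε}(τ)), is strictly greater than 1. -/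
/-- The second nonzero eigenvalue of the Jacobian of the return map of the `S₃ × S₂` cluster
periodic orbit, `λ₂ = (-1 + 2 Hε'(τ)) Hε'(Hε(τ)) H2ε'(τ + H2ε(τ))`, is strictly
greater than 1. -/
theorem s3s2_eigenvalue_two_gt_one
    (U Hε H2ε : ℝ → ℝ) (ε τ : ℝ)
    (hU : ContDiff ℝ 2 U) (hU0 : U 0 = 0) (hU1 : U 1 = 1)
    (hU' : ∀ x ∈ Set.Icc (0:ℝ) 1, 0 < deriv U x)
    (hU'' : ∀ x ∈ Set.Icc (0:ℝ) 1, deriv (deriv U) x < 0)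
    (hε : 0 < ε) (hτ : τ ∈ Set.Ioo (0:ℝ) 1)
    -- defining relations in neighborhoods of the evaluation points
    (hrel1 : ∀ᶠ x in nhds τ, U (Hε x) = U x + ε)
    (hrel2 : ∀ᶠ x in nhds (Hε τ), U (Hε x) = U x + ε)
    (hrel3 : ∀ᶠ x in nhds τ, U (H2ε x) = U x + 2 * ε)
    (hrel4 : ∀ᶠ x in nhds (τ + H2ε τ), U (H2ε x) = U x + 2 * ε)
    -- all reception events are sub-threshold: points and images lie in [0,1]
    (hm1 : Hε τ ∈ Set.Icc (0:ℝ) 1)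
    (hm2 : Hε (Hε τ) ∈ Set.Icc (0:ℝ) 1)
    (hm3 : H2ε τ ∈ Set.Icc (0:ℝ) 1)
    (hm4 : τ + H2ε τ ∈ Set.Icc (0:ℝ) 1)
    (hm5 : H2ε (τ + H2ε τ) ∈ Set.Icc (0:ℝ) 1)
    -- differentiability at the evaluation points
    (hd1 : DifferentiableAt ℝ Hε τ)
    (hd2 : DifferentiableAt ℝ Hε (Hε τ))
    (hd3 : DifferentiableAt ℝ H2ε (τ + H2ε τ)) :
    1 < (-1 + 2 * deriv Hε τ) * deriv Hε (Hε τ) * deriv H2ε (τ + H2ε τ) := by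
  have hτI : τ ∈ Set.Icc (0:ℝ) 1 := ⟨hτ.1.le, hτ.2.le⟩
  have ha : 1 < deriv Hε τ :=
    pulse_deriv_gt_one U Hε ε τ hU hU' hU'' hε hτI hm1 hrel1 hd1
  have hb : 1 < deriv Hε (Hε τ) :=
    pulse_deriv_gt_one U Hε ε (Hε τ) hU hU' hU'' hε hm1 hm2 hrel2 hd2
  have hc : 1 < deriv H2ε (τ + H2ε τ) :=
    pulse_deriv_gt_one U H2ε (2 * ε) (τ + H2ε τ) hU hU' hU'' (by linarith)
      hm4 hm5 hrel4 hd3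
  have h1 : 1 < (-1 + 2 * deriv Hε τ) * deriv Hε (Hε τ) := by nlinarith
  nlinarith [h1, hc]
end

section
/- Let ε > 0 and τ ∈ (0,1). Suppose H_ε, H_{2ε}, H_{3ε} are differentiable at the points where they are evaluated below, satisfy their defining relations U(H_μ(x)) = U(x) + μ in neighborhoods of those points, and all reception events involved are sub-threshold (i.e. the points τ, H_ε(τ), H_{2ε}(τ), τ + H_{3ε}(τ) and their images lie in [0,1]). Then the second nonzero eigenvalue of the Jacobian of the return map of the S₄×S₁ cluster periodic orbit, λ₂ = (−1 + (1 + H_ε'(τ))·H_ε'(H_ε(τ)))·H_ε'(H_{2ε}(τ))·H_ε'(τ + H_{3ε}(τ)), is strictly greater than 1. -/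
lemma key_deriv_gt_one (U Hε : ℝ → ℝ) (ε : ℝ)
    (hU : ContDiff ℝ 2 U)
    (hU' : ∀ x ∈ Set.Icc (0:ℝ) 1, 0 < deriv U x)
    (hU'' : ∀ x ∈ Set.Icc (0:ℝ) 1, deriv (deriv U) x < 0)
    (hε : 0 < ε) (a : ℝ) (ha : a ∈ Set.Icc (0:ℝ) 1) (hb : Hε a ∈ Set.Icc (0:ℝ) 1)
    (hrel : ∀ᶠ x in nhds a, U (Hε x) = U x + ε)
    (hd : DifferentiableAt ℝ Hε a) : 1 < deriv Hε a := by
  have hUdiff : Differentiable ℝ U := hU.differentiable (by norm_num)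
  have hUderivCont : Continuous (deriv U) := hU.continuous_deriv one_le_two
  -- derivative equation
  have hcomp : deriv (fun x => U (Hε x)) a = deriv U (Hε a) * deriv Hε a :=
    deriv_comp a (hUdiff (Hε a)) hd
  have hrhs : deriv (fun x => U x + ε) a = deriv U a := by
    simp [deriv_add_const]
  have heq : deriv (fun x => U (Hε x)) a = deriv (fun x => U x + ε) a :=
    Filter.EventuallyEq.deriv_eq hrel
  have hkey : deriv U (Hε a) * deriv Hε a = deriv U a := by
    rw [← hcomp, heq, hrhs]
  -- U strictly monotone on [0,1]
  have hmono : StrictMonoOn U (Set.Icc (0:ℝ) 1) := by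
    apply strictMonoOn_of_deriv_pos (convex_Icc 0 1) hUdiff.continuous.continuousOn
    intro x hx
    exact hU' x (interior_subset hx)
  -- Hε a > a
  have hgt : a < Hε a := by
    by_contra h
    push_neg at h
    have : U (Hε a) ≤ U a := hmono.monotoneOn hb ha h
    have hUeq : U (Hε a) = U a + ε := hrel.self_of_nhds
    linarith
  -- deriv U strictly anti on [0,1]
  have hanti : StrictAntiOn (deriv U) (Set.Icc (0:ℝ) 1) := by
    apply strictAntiOn_of_deriv_neg (convex_Icc 0 1) hUderivCont.continuousOn
    intro x hx
    exact hU'' x (interior_subset hx)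
  have hlt : deriv U (Hε a) < deriv U a := hanti ha hb hgt
  have hpos : 0 < deriv U (Hε a) := hU' _ hb
  nlinarith



/-- The second nonzero eigenvalue of the Jacobian of the return map of the `S₄ × S₁` cluster
periodic orbit, `λ₂ = (-1 + (1 + Hε'(τ)) Hε'(Hε(τ))) Hε'(H2ε(τ)) Hε'(τ + H3ε(τ))`,
is strictly greater than 1. -/
theorem s4s1_eigenvalue_two_gt_one
    (U Hε H2ε H3ε : ℝ → ℝ) (ε τ : ℝ)
    (hU : ContDiff ℝ 2 U) (hU0 : U 0 = 0) (hU1 : U 1 = 1)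
    (hU' : ∀ x ∈ Set.Icc (0:ℝ) 1, 0 < deriv U x)
    (hU'' : ∀ x ∈ Set.Icc (0:ℝ) 1, deriv (deriv U) x < 0)
    (hε : 0 < ε) (hτ : τ ∈ Set.Ioo (0:ℝ) 1)
    -- defining relations in neighborhoods of the evaluation points
    (hrel1 : ∀ᶠ x in nhds τ, U (Hε x) = U x + ε)
    (hrel2 : ∀ᶠ x in nhds (Hε τ), U (Hε x) = U x + ε)
    (hrel3 : ∀ᶠ x in nhds (H2ε τ), U (Hε x) = U x + ε)
    (hrel4 : ∀ᶠ x in nhds (τ + H3ε τ), U (Hε x) = U x + ε)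
    (hrel5 : ∀ᶠ x in nhds τ, U (H2ε x) = U x + 2 * ε)
    (hrel6 : ∀ᶠ x in nhds τ, U (H3ε x) = U x + 3 * ε)
    -- all reception events are sub-threshold: points and images lie in [0,1]
    (hm1 : Hε τ ∈ Set.Icc (0:ℝ) 1)
    (hm2 : H2ε τ ∈ Set.Icc (0:ℝ) 1)
    (hm3 : H3ε τ ∈ Set.Icc (0:ℝ) 1)
    (hm4 : Hε (Hε τ) ∈ Set.Icc (0:ℝ) 1)
    (hm5 : Hε (H2ε τ) ∈ Set.Icc (0:ℝ) 1)
    (hm6 : τ + H3ε τ ∈ Set.Icc (0:ℝ) 1)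
    (hm7 : Hε (τ + H3ε τ) ∈ Set.Icc (0:ℝ) 1)
    -- differentiability at the evaluation points
    (hd1 : DifferentiableAt ℝ Hε τ)
    (hd2 : DifferentiableAt ℝ Hε (Hε τ))
    (hd3 : DifferentiableAt ℝ Hε (H2ε τ))
    (hd4 : DifferentiableAt ℝ Hε (τ + H3ε τ)) :
    1 < (-1 + (1 + deriv Hε τ) * deriv Hε (Hε τ)) * deriv Hε (H2ε τ) *
        deriv Hε (τ + H3ε τ) := by
  have hτI : τ ∈ Set.Icc (0:ℝ) 1 := ⟨hτ.1.le, hτ.2.le⟩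
  have h1 : 1 < deriv Hε τ := key_deriv_gt_one U Hε ε hU hU' hU'' hε τ hτI hm1 hrel1 hd1
  have h2 : 1 < deriv Hε (Hε τ) := key_deriv_gt_one U Hε ε hU hU' hU'' hε _ hm1 hm4 hrel2 hd2
  have h3 : 1 < deriv Hε (H2ε τ) := key_deriv_gt_one U Hε ε hU hU' hU'' hε _ hm2 hm5 hrel3 hd3
  have h4 : 1 < deriv Hε (τ + H3ε τ) := key_deriv_gt_one U Hε ε hU hU' hU'' hε _ hm6 hm7 hrel4 hd4
  set a := deriv Hε τ
  set b := deriv Hε (Hε τ)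
  set c := deriv Hε (H2ε τ)
  set d := deriv Hε (τ + H3ε τ)
  have hfac : 1 < -1 + (1 + a) * b := by nlinarith
  have step1 : 1 < (-1 + (1 + a) * b) * c := by nlinarith
  nlinarith
end

section
/- Let ε > 0 and 0 < τ' < τ < 1. Suppose H_ε and H_{2ε} are differentiable at the points where they are evaluated below, satisfy their defining relations U(H_μ(x)) = U(x) + μ in neighborhoods of those points, and all reception events involved are sub-threshold (i.e. the points τ', τ − τ' + H_{2ε}(τ'), τ' + H_ε(τ − τ' + H_{2ε}(τ')) and their images lie in [0,1]). Then the unique nonzero eigenvalue of the Jacobian of the return map of the S₂×S₂×S₁ cluster periodic orbit, λ₁ = H_ε'(τ' + H_ε(τ − τ' + H_{2ε}(τ')))·(−1 + H_ε'(τ − τ' + H_{2ε}(τ'))·(1 + H_{2ε}'(τ'))), is strictly greater than 1. -/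
/-- Lemma 1: at a sub-threshold reception point the derivative of the
pulse-response map is strictly greater than 1. -/
lemma pulse_response_deriv_gt_one
    (U H : ℝ → ℝ) (μ x : ℝ)
    (hU : ContDiff ℝ 2 U)
    (hU' : ∀ y ∈ Set.Icc (0:ℝ) 1, 0 < deriv U y)
    (hU'' : ∀ y ∈ Set.Icc (0:ℝ) 1, deriv (deriv U) y < 0)
    (hμ : 0 < μ)
    (hrel : ∀ᶠ y in nhds x, U (H y) = U y + μ)
    (hx : x ∈ Set.Icc (0:ℝ) 1) (hHx : H x ∈ Set.Icc (0:ℝ) 1)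
    (hd : DifferentiableAt ℝ H x) : 1 < deriv H x := by
  have hUdiff : Differentiable ℝ U := hU.differentiable (by norm_num)
  have hUc2 : ContDiff ℝ 1 (deriv U) := by
    have := (contDiff_succ_iff_deriv (n := 1)).mp (by exact_mod_cast hU)
    exact this.2.2
  -- strict monotonicity of U on [0,1]
  have hmono : StrictMonoOn U (Set.Icc (0:ℝ) 1) := by
    apply strictMonoOn_of_deriv_pos (convex_Icc 0 1) (hUdiff.continuous.continuousOn)
    intro y hy
    exact hU' y (Set.mem_of_mem_of_subset hy (by rw [interior_Icc]; exact Set.Ioo_subset_Icc_self))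
  -- strict antitonicity of U' on [0,1]
  have hanti : StrictAntiOn (deriv U) (Set.Icc (0:ℝ) 1) := by
    apply strictAntiOn_of_deriv_neg (convex_Icc 0 1) (hUc2.continuous.continuousOn)
    intro y hy
    exact hU'' y (Set.mem_of_mem_of_subset hy (by rw [interior_Icc]; exact Set.Ioo_subset_Icc_self))
  -- x < H x
  have hlt : x < H x := by
    by_contra h
    push_neg at h
    rcases lt_or_eq_of_le h with h | h
    · have := hmono hHx hx h
      have heq : U (H x) = U x + μ := hrel.self_of_nhds
      linarith
    · have heq : U (H x) = U x + μ := hrel.self_of_nhds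
      rw [h] at heq; linarith
  -- differentiate the relation
  have hderiv : deriv U (H x) * deriv H x = deriv U x := by
    have h1 : deriv (fun y => U (H y)) x = deriv (fun y => U y + μ) x :=
      Filter.EventuallyEq.deriv_eq hrel
    simp only [← Function.comp_def] at h1
    rw [deriv_comp (x := x) hUdiff.differentiableAt hd, deriv_add_const] at h1
    exact h1
  have hp1 : 0 < deriv U (H x) := hU' _ hHx
  have hp2 : deriv U (H x) < deriv U x := hanti hx hHx hlt
  nlinarith [mul_pos hp1 (lt_trans hp1 hp2)]

/-- The unique nonzero eigenvalue of the Jacobian of the return map of the `S₂ × S₂ × S₁`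
cluster periodic orbit,
`λ₁ = Hε'(τ' + Hε(τ - τ' + H2ε(τ'))) (-1 + Hε'(τ - τ' + H2ε(τ')) (1 + H2ε'(τ')))`,
is strictly greater than 1. -/
theorem s2s2s1_eigenvalue_gt_one
    (U Hε H2ε : ℝ → ℝ) (ε τ τ' : ℝ)
    (hU : ContDiff ℝ 2 U) (hU0 : U 0 = 0) (hU1 : U 1 = 1)
    (hU' : ∀ x ∈ Set.Icc (0:ℝ) 1, 0 < deriv U x)
    (hU'' : ∀ x ∈ Set.Icc (0:ℝ) 1, deriv (deriv U) x < 0)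
    (hε : 0 < ε) (hτ'0 : 0 < τ') (hτ'τ : τ' < τ) (hτ1 : τ < 1)
    -- defining relations in neighborhoods of the evaluation points
    (hrel1 : ∀ᶠ x in nhds τ', U (H2ε x) = U x + 2 * ε)
    (hrel2 : ∀ᶠ x in nhds (τ - τ' + H2ε τ'), U (Hε x) = U x + ε)
    (hrel3 : ∀ᶠ x in nhds (τ' + Hε (τ - τ' + H2ε τ')), U (Hε x) = U x + ε)
    -- all reception events are sub-threshold: points and images lie in [0,1]
    (hm1 : H2ε τ' ∈ Set.Icc (0:ℝ) 1)
    (hm2 : τ - τ' + H2ε τ' ∈ Set.Icc (0:ℝ) 1)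
    (hm3 : Hε (τ - τ' + H2ε τ') ∈ Set.Icc (0:ℝ) 1)
    (hm4 : τ' + Hε (τ - τ' + H2ε τ') ∈ Set.Icc (0:ℝ) 1)
    (hm5 : Hε (τ' + Hε (τ - τ' + H2ε τ')) ∈ Set.Icc (0:ℝ) 1)
    -- differentiability at the evaluation points
    (hd1 : DifferentiableAt ℝ H2ε τ')
    (hd2 : DifferentiableAt ℝ Hε (τ - τ' + H2ε τ'))
    (hd3 : DifferentiableAt ℝ Hε (τ' + Hε (τ - τ' + H2ε τ'))) :
    1 < deriv Hε (τ' + Hε (τ - τ' + H2ε τ')) *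
        (-1 + deriv Hε (τ - τ' + H2ε τ') * (1 + deriv H2ε τ')) := by
  have hτ'mem : τ' ∈ Set.Icc (0:ℝ) 1 := ⟨le_of_lt hτ'0, by linarith⟩
  have h1 : 1 < deriv H2ε τ' :=
    pulse_response_deriv_gt_one U H2ε (2*ε) τ' hU hU' hU'' (by linarith) hrel1 hτ'mem hm1 hd1
  have h2 : 1 < deriv Hε (τ - τ' + H2ε τ') :=
    pulse_response_deriv_gt_one U Hε ε _ hU hU' hU'' hε hrel2 hm2 hm3 hd2
  have h3 : 1 < deriv Hε (τ' + Hε (τ - τ' + H2ε τ')) :=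
    pulse_response_deriv_gt_one U Hε ε _ hU hU' hU'' hε hrel3 hm4 hm5 hd3
  have hd' : 1 < -1 + deriv Hε (τ - τ' + H2ε τ') * (1 + deriv H2ε τ') := by nlinarith
  calc (1:ℝ) < -1 + deriv Hε (τ - τ' + H2ε τ') * (1 + deriv H2ε τ') := hd'
    _ = 1 * (-1 + deriv Hε (τ - τ' + H2ε τ') * (1 + deriv H2ε τ')) := (one_mul _).symm
    _ < deriv Hε (τ' + Hε (τ - τ' + H2ε τ')) *
        (-1 + deriv Hε (τ - τ' + H2ε τ') * (1 + deriv H2ε τ')) :=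
      mul_lt_mul_of_pos_right h3 (by linarith)
end

section
/- Consider states s = (P, Q, t) where P, Q are disjoint 2-element subsets of Fin 5 and t is the remaining element (P the unstable S₂ cluster, Q the stable S₂ cluster, t the singleton), and define a transition: choosing a perturbed element p ∈ P with P = {p, q}, the successor state is (Q, {q, t}, p). Then every closed path in this transition digraph has length at least 5: if s₀, s₁, …, s_k is any sequence with k ≥ 1 in which each s_{m+1} is a transition of s_m and s_k = s₀, then k ≥ 5. -/
/-- An `S₂ × S₂ × S₁` cluster state of 5 oscillators: `P` is the unstable `S₂` cluster,
`Q` the stable `S₂` cluster, and `t` the singleton element. -/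
structure S2S2S1State where
  P : Finset (Fin 5)
  Q : Finset (Fin 5)
  t : Fin 5
  hP : P.card = 2
  hQ : Q.card = 2
  hPQ : Disjoint P Q
  ht : t ∉ P ∪ Q

/-- The perturbation-induced transition rule: choosing a perturbed element `p ∈ P` with
`P = {p, q}`, the successor state has unstable cluster `Q`, stable cluster `{q, t}`,
and singleton `p`. -/
def S2S2S1Step (s s' : S2S2S1State) : Prop :=
  ∃ p q : Fin 5, p ≠ q ∧ s.P = {p, q} ∧ s'.P = s.Q ∧ s'.Q = {q, s.t} ∧ s'.t = p

/-- Every closed path in the `S₂ × S₂ × S₁` transition digraph has length at least 5. -/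
theorem s2s2s1_closed_path_length_ge_five
    (k : ℕ) (s : ℕ → S2S2S1State)
    (hk : 1 ≤ k)
    (hstep : ∀ m, m < k → S2S2S1Step (s m) (s (m + 1)))
    (hclosed : s k = s 0) :
    5 ≤ k := by
  by_contra h
  push_neg at h
  interval_cases k
  · -- k = 1 : P₀ = Q₀ contradicts disjointness
    obtain ⟨p, q, hne, hP0, hP1, hQ1, ht1⟩ := hstep 0 (by norm_num)
    rw [hclosed] at hP1
    have hd := (s 0).hPQ
    rw [← hP1] at hd
    have hempty := disjoint_self.mp hd
    have := (s 0).hP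
    rw [hempty] at this; rw [Finset.bot_eq_empty] at this
    simp at this
  · -- k = 2 : t₀ ∈ P₀
    obtain ⟨p0, q0, hne0, hP0, hP1, hQ1, ht1⟩ := hstep 0 (by norm_num)
    obtain ⟨p1, q1, hne1, hP1', hP2, hQ2, ht2⟩ := hstep 1 (by norm_num)
    rw [hclosed, hQ1] at hP2
    have hmem : (s 0).t ∈ (s 0).P := by
      rw [hP2]; exact Finset.mem_insert_of_mem (Finset.mem_singleton_self _)
    exact (s 0).ht (Finset.mem_union_left _ hmem)
  · -- k = 3 : q₁ ∈ P₀ ∩ Q₀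
    obtain ⟨p0, q0, hne0, hP0, hP1, hQ1, ht1⟩ := hstep 0 (by norm_num)
    obtain ⟨p1, q1, hne1, hP1', hP2, hQ2, ht2⟩ := hstep 1 (by norm_num)
    obtain ⟨p2, q2, hne2, hP2', hP3, hQ3, ht3⟩ := hstep 2 (by norm_num)
    rw [hclosed, hQ2] at hP3
    have hmemP : q1 ∈ (s 0).P := by
      rw [hP3]; exact Finset.mem_insert_self _ _
    have hmemQ : q1 ∈ (s 0).Q := by
      rw [← hP1, hP1']; exact Finset.mem_insert_of_mem (Finset.mem_singleton_self _)
    exact Finset.disjoint_left.mp (s 0).hPQ hmemP hmemQ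
  · -- k = 4 : p₁ ∈ P₀ ∩ Q₀
    obtain ⟨p0, q0, hne0, hP0, hP1, hQ1, ht1⟩ := hstep 0 (by norm_num)
    obtain ⟨p1, q1, hne1, hP1', hP2, hQ2, ht2⟩ := hstep 1 (by norm_num)
    obtain ⟨p2, q2, hne2, hP2', hP3, hQ3, ht3⟩ := hstep 2 (by norm_num)
    obtain ⟨p3, q3, hne3, hP3', hP4, hQ4, ht4⟩ := hstep 3 (by norm_num)
    rw [hclosed, hQ3, ht2] at hP4
    have hmemP : p1 ∈ (s 0).P := by
      rw [hP4]; exact Finset.mem_insert_of_mem (Finset.mem_singleton_self _)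
    have hmemQ : p1 ∈ (s 0).Q := by
      rw [← hP1, hP1']; exact Finset.mem_insert_self _ _
    exact Finset.disjoint_left.mp (s 0).hPQ hmemP hmemQ
end
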